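/- arXiv:1610.09432 — 4 statements merged into one kernel-verified Lean document; each statement's English description precedes it below -/
import Mathlib

section
/- Let K⁺ and K⁻ be entrywise-nonnegative real m×n matrices, b ∈ ℝ^m, and c ∈ ℝ^n. Consider the linear program max ⟨c, p − n⟩ over P = {(p, n) ∈ ℝ^n × ℝ^n : p ≥ 0, n ≥ 0, K⁺p + K⁻n ≤ b}. If this linear program has an optimal solution (a feasible point attaining the supremum of the objective over P), then it has an optimal solution (p*, n*) satisfying the complementarity condition p*_i n*_i = 0 for every coordinate i. -/
open Matrix

/-- If the linear program `max ⟨c, p − n⟩` over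
`P = {(p,n) : p ≥ 0, n ≥ 0, K⁺p + K⁻n ≤ b}` (with `K⁺, K⁻` entrywise nonnegative)
has an optimal solution, then it has an optimal solution satisfying the
complementarity condition `p_i n_i = 0` for every `i`. -/
theorem lp_has_complementary_optimal {m n : ℕ}
    (Kp Kn : Matrix (Fin m) (Fin n) ℝ)
    (hKp : ∀ i j, 0 ≤ Kp i j) (hKn : ∀ i j, 0 ≤ Kn i j)
    (b : Fin m → ℝ) (c : Fin n → ℝ)
    (P : Set ((Fin n → ℝ) × (Fin n → ℝ)))
    (hP : P = {pq | (∀ i, 0 ≤ pq.1 i) ∧ (∀ i, 0 ≤ pq.2 i) ∧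
      ∀ i, (Kp *ᵥ pq.1 + Kn *ᵥ pq.2) i ≤ b i})
    (hopt : ∃ pq ∈ P, ∀ rs ∈ P, c ⬝ᵥ (rs.1 - rs.2) ≤ c ⬝ᵥ (pq.1 - pq.2)) :
    ∃ pq ∈ P, (∀ rs ∈ P, c ⬝ᵥ (rs.1 - rs.2) ≤ c ⬝ᵥ (pq.1 - pq.2)) ∧
      ∀ i, pq.1 i * pq.2 i = 0 := by
  obtain ⟨⟨p, q⟩, hmem, hbest⟩ := hopt
  subst hP
  obtain ⟨hp, hq, hb⟩ := hmem
  set p' : Fin n → ℝ := fun i => p i - min (p i) (q i) with hp'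
  set q' : Fin n → ℝ := fun i => q i - min (p i) (q i) with hq'
  have hdiff : p' - q' = p - q := by
    funext i; simp only [Pi.sub_apply, hp', hq']; ring
  have hp'le : ∀ i, p' i ≤ p i := fun i =>
    sub_le_self _ (le_min (hp i) (hq i))
  have hq'le : ∀ i, q' i ≤ q i := fun i =>
    sub_le_self _ (le_min (hp i) (hq i))
  have hp'0 : ∀ i, 0 ≤ p' i := fun i => sub_nonneg.mpr (min_le_left _ _)
  have hq'0 : ∀ i, 0 ≤ q' i := fun i => sub_nonneg.mpr (min_le_right _ _)
  have hmv : ∀ i, (Kp *ᵥ p' + Kn *ᵥ q') i ≤ (Kp *ᵥ p + Kn *ᵥ q) i := by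
    intro i
    simp only [Pi.add_apply, mulVec, dotProduct]
    exact add_le_add
      (Finset.sum_le_sum fun j _ => mul_le_mul_of_nonneg_left (hp'le j) (hKp i j))
      (Finset.sum_le_sum fun j _ => mul_le_mul_of_nonneg_left (hq'le j) (hKn i j))
  refine ⟨(p', q'), ⟨hp'0, hq'0, fun i => (hmv i).trans (hb i)⟩, ?_, ?_⟩
  · intro rs hrs
    calc c ⬝ᵥ (rs.1 - rs.2) ≤ c ⬝ᵥ (p - q) := hbest rs hrs
    _ = c ⬝ᵥ (p' - q') := by rw [hdiff]
  · intro i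
    rcases le_total (p i) (q i) with h | h
    · have : p' i = 0 := by simp [hp', min_eq_left h]
      simp [this]
    · have : q' i = 0 := by simp [hq', min_eq_right h]
      simp [this]
end

section
/- Let K⁺ and K⁻ be entrywise-nonnegative real m×n matrices, b ∈ ℝ^m; let W = {w ∈ ℝ^n : K⁺w⁺ + K⁻w⁻ ≤ b componentwise} and P = {(p, n) ∈ ℝ^n × ℝ^n : p ≥ 0, n ≥ 0, K⁺p + K⁻n ≤ b}. Let ν ∈ ℝ^k, a ∈ ℝ^k, L ∈ ℝ, and let Λ be a real k×n matrix. Then the robust line-limit constraint ⟨ν, a − Λw⟩ ≤ L holds for every w ∈ W if and only if ⟨ν, a − Λ(p − n)⟩ ≤ L holds for every (p, n) ∈ P. -/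
open Matrix

/-- Componentwise positive part of a vector. -/
def vecPos {ι : Type*} (w : ι → ℝ) : ι → ℝ := fun i => max (w i) 0

/-- Componentwise negative part of a vector. -/
def vecNeg {ι : Type*} (w : ι → ℝ) : ι → ℝ := fun i => max (-(w i)) 0

/-- The robust line-limit constraint `⟨ν, a − Λw⟩ ≤ L` holds for every `w` in the
concentration model `W = {w : K⁺w⁺ + K⁻w⁻ ≤ b}` if and only if
`⟨ν, a − Λ(p − n)⟩ ≤ L` holds for every `(p, n)` in the LP feasible region
`P = {(p,n) : p ≥ 0, n ≥ 0, K⁺p + K⁻n ≤ b}`. -/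
theorem robust_line_limit_iff_lp {m n k : ℕ}
    (Kp Kn : Matrix (Fin m) (Fin n) ℝ)
    (hKp : ∀ i j, 0 ≤ Kp i j) (hKn : ∀ i j, 0 ≤ Kn i j)
    (b : Fin m → ℝ)
    (W : Set (Fin n → ℝ))
    (hW : W = {w | ∀ i, (Kp *ᵥ vecPos w + Kn *ᵥ vecNeg w) i ≤ b i})
    (P : Set ((Fin n → ℝ) × (Fin n → ℝ)))
    (hP : P = {pq | (∀ i, 0 ≤ pq.1 i) ∧ (∀ i, 0 ≤ pq.2 i) ∧
      ∀ i, (Kp *ᵥ pq.1 + Kn *ᵥ pq.2) i ≤ b i})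
    (ν a : Fin k → ℝ) (L : ℝ) (Λ : Matrix (Fin k) (Fin n) ℝ) :
    (∀ w ∈ W, ν ⬝ᵥ (a - Λ *ᵥ w) ≤ L) ↔
      (∀ pq ∈ P, ν ⬝ᵥ (a - Λ *ᵥ (pq.1 - pq.2)) ≤ L) := by
  subst hW hP
  constructor
  · rintro h ⟨p, q⟩ ⟨hp, hq, hb⟩
    apply h
    intro i
    refine le_trans ?_ (hb i)
    simp only [Matrix.mulVec, dotProduct, Pi.add_apply]
    refine add_le_add (Finset.sum_le_sum fun j _ => ?_)
      (Finset.sum_le_sum fun j _ => ?_)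
    · refine mul_le_mul_of_nonneg_left ?_ (hKp i j)
      have := hq j
      exact max_le (by simp [Pi.sub_apply]; linarith) (hp j)
    · refine mul_le_mul_of_nonneg_left ?_ (hKn i j)
      have := hp j
      exact max_le (by simp [Pi.sub_apply]; linarith) (hq j)
  · intro h w hw
    have key : vecPos w - vecNeg w = w := by
      funext i
      simp [vecPos, vecNeg, max_zero_sub_max_neg_zero_eq_self]
    have := h (vecPos w, vecNeg w)
      ⟨fun i => le_max_right _ _, fun i => le_max_right _ _, hw⟩
    simpa [key] using this
end

section
/- Let K⁺ and K⁻ be entrywise-nonnegative real ℓ×(m+m') matrices, b ∈ ℝ^ℓ, and let W = {w ∈ ℝ^{m+m'} : K⁺w⁺ + K⁻w⁻ ≤ b componentwise}. Let Φ : ℝ^m → ℝ be continuous and monotone nondecreasing with respect to the componentwise order (u ≤ v componentwise implies Φ(u) ≤ Φ(v)), and let E' ∈ ℝ with Φ(0) ≤ E'. Suppose w = (w₁, w₂) ∈ W, with w₁ ∈ ℝ^m the coordinates indexed by the first block and w₂ ∈ ℝ^{m'} the remaining coordinates, satisfies Φ(w₁) = E'. Then there exists w̆₁ ∈ ℝ^m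 with w̆₁ ≥ 0 componentwise, (w̆₁, w₂) ∈ W, and Φ(w̆₁) = E'. -/
open Matrix

/-- Lemma 2 (charging case): if `Φ` is continuous and monotone nondecreasing with
`Φ(0) ≤ E'`, and `(w₁, w₂)` belongs to the concentration model `W` with
`Φ(w₁) = E'`, then there is a componentwise nonnegative `w̆₁` with
`(w̆₁, w₂) ∈ W` and `Φ(w̆₁) = E'`. -/
theorem sign_consistent_scenario_nonneg {ℓ m m' : ℕ}
    (Kp Kn : Matrix (Fin ℓ) (Fin m ⊕ Fin m') ℝ)
    (hKp : ∀ i j, 0 ≤ Kp i j) (hKn : ∀ i j, 0 ≤ Kn i j)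
    (b : Fin ℓ → ℝ)
    (W : Set (Fin m ⊕ Fin m' → ℝ))
    (hW : W = {w | ∀ i, (Kp *ᵥ vecPos w + Kn *ᵥ vecNeg w) i ≤ b i})
    (Φ : (Fin m → ℝ) → ℝ) (hcont : Continuous Φ)
    (hmono : ∀ u v : Fin m → ℝ, (∀ i, u i ≤ v i) → Φ u ≤ Φ v)
    (E' : ℝ) (hE : Φ 0 ≤ E')
    (w₁ : Fin m → ℝ) (w₂ : Fin m' → ℝ)
    (hmem : Sum.elim w₁ w₂ ∈ W) (hΦ : Φ w₁ = E') :
    ∃ w₁' : Fin m → ℝ, (∀ i, 0 ≤ w₁' i) ∧ Sum.elim w₁' w₂ ∈ W ∧ Φ w₁' = E' := by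
  subst hW
  -- IVT on κ ↦ Φ(κ • w₁⁺)
  set p : Fin m → ℝ := vecPos w₁ with hp
  have hp0 : ∀ i, 0 ≤ p i := fun i => le_max_right _ _
  have hg : Continuous (fun κ : ℝ => Φ (κ • p)) :=
    hcont.comp (continuous_id.smul continuous_const)
  have h0 : Φ ((0 : ℝ) • p) ≤ E' := by simpa using hE
  have h1 : E' ≤ Φ ((1 : ℝ) • p) := by
    rw [← hΦ]
    apply hmono
    intro i
    simpa [p, vecPos] using le_max_left (w₁ i) 0
  obtain ⟨κ, hκmem, hκ⟩ := intermediate_value_Icc (by norm_num : (0:ℝ) ≤ 1)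
    (hg.continuousOn (s := Set.Icc 0 1)) ⟨h0, h1⟩
  obtain ⟨hκ0, hκ1⟩ := hκmem
  refine ⟨κ • p, fun i => mul_nonneg hκ0 (hp0 i), ?_, hκ⟩
  -- membership: compare componentwise with original scenario
  intro i
  have hmemi := hmem i
  refine le_trans ?_ hmemi
  simp only [Pi.add_apply, mulVec, dotProduct]
  have hPos : ∀ j, vecPos (Sum.elim (κ • p) w₂) j ≤ vecPos (Sum.elim w₁ w₂) j := by
    rintro (j | j)
    · show max (κ * max (w₁ j) 0) 0 ≤ max (w₁ j) 0
      have h2 : (0:ℝ) ≤ max (w₁ j) 0 := le_max_right _ _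
      rw [max_eq_left (mul_nonneg hκ0 h2)]
      nlinarith
    · simp [vecPos]
  have hNeg : ∀ j, vecNeg (Sum.elim (κ • p) w₂) j ≤ vecNeg (Sum.elim w₁ w₂) j := by
    rintro (j | j)
    · show max (-(κ * max (w₁ j) 0)) 0 ≤ max (-(w₁ j)) 0
      have h2 : (0:ℝ) ≤ max (w₁ j) 0 := le_max_right _ _
      rw [max_eq_right (show -(κ * max (w₁ j) 0) ≤ 0 by nlinarith)]
      exact le_max_right _ _
    · simp [vecNeg]
  refine add_le_add (Finset.sum_le_sum fun j _ => ?_) (Finset.sum_le_sum fun j _ => ?_)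
  · exact mul_le_mul_of_nonneg_left (hPos j) (hKp i j)
  · exact mul_le_mul_of_nonneg_left (hNeg j) (hKn i j)
end

section
/- Let K⁺ and K⁻ be entrywise-nonnegative real ℓ×(m+m') matrices, b ∈ ℝ^ℓ, and let W = {w ∈ ℝ^{m+m'} : K⁺w⁺ + K⁻w⁻ ≤ b componentwise}. Let Φ : ℝ^m → ℝ be continuous and monotone nondecreasing with respect to the componentwise order, and let E' ∈ ℝ with E' ≤ Φ(0). Suppose w = (w₁, w₂) ∈ W, with w₁ ∈ ℝ^m and w₂ ∈ ℝ^{m'}, satisfies Φ(w₁) = E'. Then there exists w̆₁ ∈ ℝ^m with w̆₁ ≤ 0 componentwise, (w̆₁, w₂) ∈ W, and Φ(w̆₁) = E'. -/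
open Matrix

/-- Lemma 2 (discharging case): if `Φ` is continuous and monotone nondecreasing with
`E' ≤ Φ(0)`, and `(w₁, w₂)` belongs to the concentration model `W` with
`Φ(w₁) = E'`, then there is a componentwise nonpositive `w̆₁` with
`(w̆₁, w₂) ∈ W` and `Φ(w̆₁) = E'`. -/
theorem sign_consistent_scenario_nonpos {ℓ m m' : ℕ}
    (Kp Kn : Matrix (Fin ℓ) (Fin m ⊕ Fin m') ℝ)
    (hKp : ∀ i j, 0 ≤ Kp i j) (hKn : ∀ i j, 0 ≤ Kn i j)
    (b : Fin ℓ → ℝ)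
    (W : Set (Fin m ⊕ Fin m' → ℝ))
    (hW : W = {w | ∀ i, (Kp *ᵥ vecPos w + Kn *ᵥ vecNeg w) i ≤ b i})
    (Φ : (Fin m → ℝ) → ℝ) (hcont : Continuous Φ)
    (hmono : ∀ u v : Fin m → ℝ, (∀ i, u i ≤ v i) → Φ u ≤ Φ v)
    (E' : ℝ) (hE : E' ≤ Φ 0)
    (w₁ : Fin m → ℝ) (w₂ : Fin m' → ℝ)
    (hmem : Sum.elim w₁ w₂ ∈ W) (hΦ : Φ w₁ = E') :
    ∃ w₁' : Fin m → ℝ, (∀ i, w₁' i ≤ 0) ∧ Sum.elim w₁' w₂ ∈ W ∧ Φ w₁' = E' := by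
  -- the negative truncation of w₁
  set v : Fin m → ℝ := fun i => min (w₁ i) 0 with hv
  have hvle : ∀ i, v i ≤ w₁ i := fun i => min_le_left _ _
  have hvnonpos : ∀ i, v i ≤ 0 := fun i => min_le_right _ _
  -- IVT along κ ↦ Φ (κ • v)
  have hf : Continuous fun κ : ℝ => Φ (κ • v) :=
    hcont.comp (continuous_id.smul continuous_const)
  have hmem' : E' ∈ Set.Icc (Φ ((1:ℝ) • v)) (Φ ((0:ℝ) • v)) := by
    constructor
    · rw [one_smul]
      exact hΦ ▸ hmono v w₁ hvle
    · rw [zero_smul]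
      exact hE
  have := intermediate_value_Icc' (by norm_num : (0:ℝ) ≤ 1)
    (hf.continuousOn (s := Set.Icc 0 1)) hmem'
  obtain ⟨κ, hκ, hκΦ⟩ := this
  obtain ⟨hκ0, hκ1⟩ := hκ
  refine ⟨κ • v, fun i => ?_, ?_, hκΦ⟩
  · exact smul_nonpos_of_nonneg_of_nonpos hκ0 (hvnonpos i)
  · rw [hW] at hmem ⊢
    intro i
    refine le_trans ?_ (hmem i)
    simp only [Pi.add_apply, mulVec, dotProduct]
    gcongr with j _ j _
    · exact hKp i j
    · cases j with
      | inl j =>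
        simp only [vecPos, Sum.elim_inl, Pi.smul_apply, smul_eq_mul]
        have : κ * v j ≤ 0 := mul_nonpos_of_nonneg_of_nonpos hκ0 (hvnonpos j)
        calc max (κ * v j) 0 = 0 := max_eq_right this
          _ ≤ max (w₁ j) 0 := le_max_right _ _
      | inr j => simp [vecPos]
    · exact hKn i j
    · cases j with
      | inl j =>
        simp only [vecNeg, Sum.elim_inl, Pi.smul_apply, smul_eq_mul]
        have h1 : -(κ * v j) = κ * (-(v j)) := by ring
        have h2 : κ * (-(v j)) ≤ -(v j) := by
          have hnn : 0 ≤ -(v j) := neg_nonneg.mpr (hvnonpos j)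
          nlinarith
        have h3 : -(v j) ≤ max (-(w₁ j)) 0 := by
          rcases le_or_gt (w₁ j) 0 with h | h
          · have : v j = w₁ j := min_eq_left h
            rw [this]; exact le_max_left _ _
          · have : v j = 0 := min_eq_right h.le
            rw [this]; simp
        calc max (-(κ * v j)) 0 ≤ max (max (-(w₁ j)) 0) 0 := by
              apply max_le_max _ le_rfl
              rw [h1]; exact h2.trans h3
          _ = max (-(w₁ j)) 0 := by
              rw [max_eq_left (le_max_right _ _)]
      | inr j => simp [vecNeg]
end
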